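/- For every a ∈ {1,...,n}, σ_a ≤ 2c · Σ_{0≤j≤L} p_j · c^{|j − i(a)|}, where c = 1/√2, i(a) = ⌊log₂ a⌋, L = ⌊log₂ n⌋, and p_j is the μ-mass of the dyadic interval I_j. -/

import Mathlib

private lemma inv_sqrt_two_pow (k : ℕ) :
    ((Real.sqrt 2)⁻¹) ^ k = (2 : ℝ) ^ (-(k : ℝ) / 2) := by
  have h : (Real.sqrt 2)⁻¹ = (2:ℝ) ^ (-(1:ℝ)/2) := by
    rw [Real.sqrt_eq_rpow, ← Real.rpow_neg (by norm_num)]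
    norm_num
  rw [h, ← Real.rpow_natCast ((2:ℝ) ^ (-(1:ℝ)/2)) k, ← Real.rpow_mul (by norm_num)]
  congr 1
  ring

private lemma logb_bounds (m : ℕ) (hm : 1 ≤ m) :
    (Nat.log 2 m : ℝ) ≤ Real.logb 2 m ∧ Real.logb 2 m < Nat.log 2 m + 1 := by
  have hm0 : (0:ℝ) < m := by exact_mod_cast hm
  constructor
  · rw [Real.le_logb_iff_rpow_le (by norm_num) hm0, Real.rpow_natCast]
    exact_mod_cast Nat.pow_log_le_self 2 (by omega)
  · rw [Real.logb_lt_iff_lt_rpow (by norm_num) hm0]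
    have : (m : ℝ) < 2 ^ (Nat.log 2 m + 1) := by
      exact_mod_cast Nat.lt_pow_succ_log_self (by norm_num) m
    calc (m:ℝ) < 2 ^ (Nat.log 2 m + 1) := this
      _ = (2:ℝ) ^ ((Nat.log 2 m : ℝ) + 1) := by
          rw [← Real.rpow_natCast 2 (Nat.log 2 m + 1)]; push_cast; ring_nf

/-- `σ_a ≤ 2c · Σ_{0≤j≤L} p_j·c^{|j - i(a)|}` with `c = 1/√2`, `i(a) = ⌊log₂ a⌋`,
`L = ⌊log₂ n⌋`, `p_j` the `μ`-mass of the dyadic interval `I_j`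
(`I_j = [2^j, 2^{j+1})` for `j < L`, `I_L = [2^L, n]`). Here
`σ_a = Σ_{1≤d≤n} μ(d)·2^{-|log₂ a - log₂ d|/2}`. -/
theorem stmt12 (n : ℕ) (hn : 1 ≤ n) (μ : ℕ → ℝ)
    (hμ0 : ∀ d, 0 ≤ μ d)
    (hsupp : ∀ d, d ∉ Finset.Icc 1 n → μ d = 0)
    (hsum : ∑ d ∈ Finset.Icc 1 n, μ d = 1)
    (a : ℕ) (ha : a ∈ Finset.Icc 1 n) :
    ∑ d ∈ Finset.Icc 1 n, μ d * (2 : ℝ) ^ (-(|Real.logb 2 a - Real.logb 2 d|) / 2) ≤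
      2 * (Real.sqrt 2)⁻¹ *
        ∑ j ∈ Finset.range (Nat.log 2 n + 1),
          (∑ d ∈ Finset.Ico (2 ^ j) (min (2 ^ (j + 1)) (n + 1)), μ d) *
            ((Real.sqrt 2)⁻¹) ^ ((j : ℤ) - (Nat.log 2 a : ℤ)).natAbs := by
  obtain ⟨ha1, han⟩ := Finset.mem_Icc.mp ha
  set L := Nat.log 2 n with hLdef
  set i := Nat.log 2 a with hidef
  set c := (Real.sqrt 2)⁻¹ with hc
  have hc0 : (0:ℝ) ≤ c := by positivity
  -- partition of Icc 1 n into dyadic blocks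
  have hpart : Finset.Icc 1 n =
      (Finset.range (L+1)).biUnion
        (fun j => Finset.Ico (2^j) (min (2^(j+1)) (n+1))) := by
    ext d
    simp only [Finset.mem_Icc, Finset.mem_biUnion, Finset.mem_range, Finset.mem_Ico, lt_min_iff]
    constructor
    · rintro ⟨h1, h2⟩
      refine ⟨Nat.log 2 d, ?_, Nat.pow_log_le_self 2 (by omega),
        Nat.lt_pow_succ_log_self (by norm_num) d, by omega⟩
      have := Nat.log_mono_right (b := 2) h2
      omega
    · rintro ⟨j, hj, h1, h2, h3⟩
      have : 1 ≤ 2^j := Nat.one_le_two_pow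
      omega
  have hdisj : (↑(Finset.range (L+1)) : Set ℕ).PairwiseDisjoint
      (fun j => Finset.Ico (2^j) (min (2^(j+1)) (n+1))) := by
    intro x _ y _ hxy
    simp only [Function.onFun, Finset.disjoint_left, Finset.mem_Ico, lt_min_iff]
    rintro d ⟨h1, h2, _⟩ ⟨h3, h4, _⟩
    exact hxy (by rw [← Nat.log_eq_of_pow_le_of_lt_pow h1 h2,
      ← Nat.log_eq_of_pow_le_of_lt_pow h3 h4])
  have hinner : ∀ j ∈ Finset.range (L+1),
      (∑ d ∈ Finset.Ico (2^j) (min (2^(j+1)) (n+1)), μ d) * c ^ ((j:ℤ) - (i:ℤ)).natAbs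
      = ∑ d ∈ Finset.Ico (2^j) (min (2^(j+1)) (n+1)),
          μ d * c ^ (((Nat.log 2 d : ℤ) - (i:ℤ)).natAbs) := by
    intro j _
    rw [Finset.sum_mul]
    refine Finset.sum_congr rfl fun d hd => ?_
    simp only [Finset.mem_Ico, lt_min_iff] at hd
    rw [Nat.log_eq_of_pow_le_of_lt_pow hd.1 hd.2.1]
  rw [Finset.sum_congr rfl hinner, ← Finset.sum_biUnion hdisj, ← hpart, Finset.mul_sum]
  refine Finset.sum_le_sum fun d hd => ?_
  obtain ⟨hd1, hdn⟩ := Finset.mem_Icc.mp hd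
  set j := Nat.log 2 d with hjdef
  set k := ((j:ℤ) - (i:ℤ)).natAbs with hkdef
  have hK : ((k : ℕ) : ℝ) = |(j:ℝ) - (i:ℝ)| := by
    rw [hkdef, Nat.cast_natAbs]
    push_cast
    rfl
  obtain ⟨hja, hjb⟩ := logb_bounds d hd1
  obtain ⟨hia, hib⟩ := logb_bounds a ha1
  have habs : |(j:ℝ) - (i:ℝ)| - 1 ≤ |Real.logb 2 a - Real.logb 2 d| := by
    rcases abs_cases (Real.logb 2 a - Real.logb 2 d) with ⟨h,_⟩|⟨h,_⟩ <;>
      rcases abs_cases ((j:ℝ) - (i:ℝ)) with ⟨h',_⟩|⟨h',_⟩ <;> linarith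
  have hexp : (2:ℝ) ^ (-(|Real.logb 2 a - Real.logb 2 d|) / 2)
      ≤ (2:ℝ) ^ (-((k:ℝ) - 1) / 2) := by
    apply Real.rpow_le_rpow_of_exponent_le one_le_two
    rw [hK]
    linarith
  have hval : (2:ℝ) ^ (-((k:ℝ) - 1) / 2) = 2 * c * c ^ k := by
    rw [show -((k:ℝ) - 1)/2 = 1/2 + (-(k:ℝ)/2) by ring,
      Real.rpow_add (by norm_num), inv_sqrt_two_pow]
    congr 1
    have hs : Real.sqrt 2 * Real.sqrt 2 = 2 := Real.mul_self_sqrt (by norm_num)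
    have hs0 : Real.sqrt 2 ≠ 0 := by positivity
    rw [← Real.sqrt_eq_rpow, hc]
    field_simp
    exact Real.sq_sqrt (by norm_num)
  calc μ d * (2:ℝ) ^ (-(|Real.logb 2 a - Real.logb 2 d|) / 2)
      ≤ μ d * (2:ℝ) ^ (-((k:ℝ) - 1) / 2) :=
        mul_le_mul_of_nonneg_left hexp (hμ0 d)
    _ = 2 * c * (μ d * c ^ k) := by rw [hval]; ring
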